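/- The function φ(t) = -t + √(1+t²) + log t - log(1+√(1+t²)) is monotonically increasing on (0,∞). -/

import Mathlib

lemma phi_hasDerivAt {t : ℝ} (ht : 0 < t) :
    HasDerivAt
      (fun t : ℝ =>
        -t + Real.sqrt (1 + t ^ 2) + Real.log t
          - Real.log (1 + Real.sqrt (1 + t ^ 2)))
      ((Real.sqrt (1 + t ^ 2) - t) / t) t := by
  set s := Real.sqrt (1 + t ^ 2) with hs
  have h0 : (0:ℝ) ≤ 1 + t ^ 2 := by positivity
  have hs2 : s ^ 2 = 1 + t ^ 2 := Real.sq_sqrt h0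
  have hspos : 0 < s := Real.sqrt_pos.mpr (by positivity)
  have hinner : HasDerivAt (fun t : ℝ => 1 + t ^ 2) (2 * t) t := by
    simpa using (hasDerivAt_pow 2 t).const_add 1
  have h2 : HasDerivAt (fun t : ℝ => Real.sqrt (1 + t ^ 2)) (t / s) t := by
    have := (Real.hasDerivAt_sqrt (by positivity : (1:ℝ) + t ^ 2 ≠ 0)).comp t hinner
    have key : t / s = 1 / (2 * Real.sqrt (1 + t ^ 2)) * (2 * t) := by
      rw [← hs, div_mul_eq_mul_div, one_mul, mul_div_mul_left _ _ two_ne_zero]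
    rw [key]
    exact this
  have h1 : HasDerivAt (fun t : ℝ => -t) (-1) t := (hasDerivAt_id t).neg
  have h3 : HasDerivAt Real.log t⁻¹ t := Real.hasDerivAt_log (ne_of_gt ht)
  have h4 : HasDerivAt (fun t : ℝ => Real.log (1 + Real.sqrt (1 + t ^ 2)))
      ((t / s) / (1 + s)) t := by
    have hne : 1 + s ≠ 0 := by positivity
    exact (h2.const_add 1).log hne
  have htot := ((h1.add h2).add h3).sub h4
  have hts : t ≠ 0 := ne_of_gt ht
  have hss : s ≠ 0 := ne_of_gt hspos
  have hne : 1 + s ≠ 0 := by positivity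
  have key : (s - t) / t = -1 + t / s + t⁻¹ - t / s / (1 + s) := by
    field_simp
    linear_combination s * hs2
  rw [key]
  exact htot

/-- The function `φ(t) = -t + √(1+t²) + log t - log(1+√(1+t²))` is monotonically
increasing on `(0, ∞)`. -/
theorem phi_monotone :
    MonotoneOn
      (fun t : ℝ =>
        -t + Real.sqrt (1 + t ^ 2) + Real.log t
          - Real.log (1 + Real.sqrt (1 + t ^ 2)))
      (Set.Ioi (0 : ℝ)) := by
  have : StrictMonoOn
      (fun t : ℝ =>
        -t + Real.sqrt (1 + t ^ 2) + Real.log t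
          - Real.log (1 + Real.sqrt (1 + t ^ 2)))
      (Set.Ioi (0 : ℝ)) := by
    apply StrictMonoOn.mono (s := Set.Ioi (0:ℝ)) ?_ le_rfl
    apply strictMonoOn_of_deriv_pos (convex_Ioi 0)
    · intro x hx
      exact ((phi_hasDerivAt hx).continuousAt).continuousWithinAt
    · intro x hx
      rw [interior_Ioi] at hx
      rw [(phi_hasDerivAt hx).deriv]
      have hx' : (0:ℝ) < x := hx
      have hs2 : Real.sqrt (1 + x ^ 2) ^ 2 = 1 + x ^ 2 := Real.sq_sqrt (by positivity)
      have hsnn : 0 ≤ Real.sqrt (1 + x ^ 2) := Real.sqrt_nonneg _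
      have : x < Real.sqrt (1 + x ^ 2) := by nlinarith
      exact div_pos (by linarith) hx'
  exact this.monotoneOn
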